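/- Suppose 0 < β < β_c, and define ν(k) = −ω/(2f(k)) + (1/2)·( ω²/f(k)² + 4(1+βk²)/f(k) )^{1/2} for k ≥ 0. Then ν attains a global minimum over [0, ∞) at a unique point k₀, this point satisfies k₀ > 0, and ν(k₀) < ν(0). Moreover, writing ν₀′ = ν(k₀), the function g(k) := 1 + βk² − ων₀′ − ν₀′²·f(k) satisfies g(k) ≥ 0 for all k ∈ ℝ, with equality precisely when k = ±k₀. -/

import Mathlib

/-- `f(k) = |k|·coth|k|`, extended by `f(0) = 1`. -/
noncomputable def fdisp (k : ℝ) : ℝ :=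
  if k = 0 then 1 else k * Real.cosh k / Real.sinh k

open Real

lemma fdisp_zero : fdisp 0 = 1 := by simp [fdisp]

lemma fdisp_even (k : ℝ) : fdisp (-k) = fdisp k := by
  rcases eq_or_ne k 0 with h | h
  · simp [h]
  · simp only [fdisp, if_neg h, if_neg (neg_ne_zero.2 h), Real.cosh_neg, Real.sinh_neg]
    ring

lemma fdisp_of_pos {k : ℝ} (h : 0 < k) : fdisp k = k * Real.cosh k / Real.sinh k := by
  rw [fdisp, if_neg h.ne']

lemma fdisp_pos (k : ℝ) : 0 < fdisp k := by
  rcases lt_trichotomy k 0 with h | h | h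
  · rw [← fdisp_even, fdisp_of_pos (by linarith)]
    have hs : 0 < Real.sinh (-k) := Real.sinh_pos_iff.2 (by linarith)
    have : (0:ℝ) < -k := by linarith
    positivity
  · simp [h, fdisp]
  · rw [fdisp_of_pos h]
    have hs : 0 < Real.sinh k := Real.sinh_pos_iff.2 h
    positivity

lemma fdisp_le (k : ℝ) (hk : 0 ≤ k) : fdisp k ≤ 1 + k := by
  rcases eq_or_lt_of_le hk with h | h
  · simp [← h, fdisp]
  · rw [fdisp_of_pos h]
    have hs : 0 < Real.sinh k := Real.sinh_pos_iff.2 h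
    rw [div_le_iff₀ hs]
    have h1 : k ≤ Real.sinh k := (Real.self_lt_sinh_iff.2 h).le
    have h2 : Real.cosh k - Real.sinh k ≤ 1 := by
      rw [Real.cosh_eq, Real.sinh_eq]
      have := Real.exp_pos (-k)
      have hle : Real.exp (-k) ≤ 1 := Real.exp_le_one_iff.2 (by linarith)
      linarith
    nlinarith

lemma continuous_fdisp : Continuous fdisp := by
  rw [continuous_iff_continuousAt]
  intro x
  rcases eq_or_ne x 0 with rfl | hx
  · rw [← continuousWithinAt_compl_self]
    have hslope : Filter.Tendsto (slope Real.sinh 0) (nhdsWithin 0 {0}ᶜ) (nhds 1) := by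
      have := hasDerivAt_iff_tendsto_slope.1 (Real.hasDerivAt_sinh 0)
      simpa using this
    have h2 : Filter.Tendsto (fun k => Real.cosh k / slope Real.sinh 0 k)
        (nhdsWithin 0 {0}ᶜ) (nhds 1) := by
      have hc : Filter.Tendsto Real.cosh (nhdsWithin (0:ℝ) {0}ᶜ) (nhds 1) := by
        simpa using (Real.continuous_cosh.tendsto 0).mono_left nhdsWithin_le_nhds
      have h3 := hc.div hslope one_ne_zero
      rw [div_one] at h3
      exact h3
    have : ∀ k ∈ ({0}ᶜ : Set ℝ), Real.cosh k / slope Real.sinh 0 k = fdisp k := by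
      intro k hk
      have hk' : k ≠ 0 := hk
      rw [slope_def_field, fdisp, if_neg hk']
      rw [Real.sinh_zero]
      have hs : Real.sinh k ≠ 0 := Real.sinh_ne_zero.2 hk'
      field_simp
      ring
    refine Filter.Tendsto.congr' ?_ h2 |>.mono_right ?_
    · exact Filter.eventually_iff_exists_mem.2 ⟨{0}ᶜ, self_mem_nhdsWithin, this⟩
    · simp [fdisp]
  · have hev : (fun k => k * Real.cosh k / Real.sinh k) =ᶠ[nhds x] fdisp := by
      filter_upwards [isOpen_compl_singleton.mem_nhds hx] with k hk
      have hk' : k ≠ 0 := hk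
      simp [fdisp, hk']
    refine ContinuousAt.congr ?_ hev
    have hs : Real.sinh x ≠ 0 := Real.sinh_ne_zero.2 hx
    exact (continuous_id.continuousAt.mul Real.continuous_cosh.continuousAt).div
      Real.continuous_sinh.continuousAt hs

noncomputable def df1 (x : ℝ) : ℝ := (sinh x * cosh x - x) / (sinh x)^2
noncomputable def df2 (x : ℝ) : ℝ := 2*(x * cosh x - sinh x) / (sinh x)^3
noncomputable def df3 (x : ℝ) : ℝ :=
  2*(x * (sinh x)^2 - 3*x*(cosh x)^2 + 3*(sinh x)*(cosh x)) / (sinh x)^4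

lemma hasDerivAt_F {x : ℝ} (hx : x ≠ 0) :
    HasDerivAt (fun k => k * cosh k / sinh k) (df1 x) x := by
  have hs : sinh x ≠ 0 := Real.sinh_ne_zero.2 hx
  have h1 : HasDerivAt (fun k : ℝ => k * cosh k) (cosh x + x * sinh x) x := by
    simpa [mul_comm] using (hasDerivAt_id x).fun_mul (Real.hasDerivAt_cosh x)
  have := h1.fun_div (Real.hasDerivAt_sinh x) hs
  refine this.congr_deriv (Eq.symm ?_)
  rw [df1]
  field_simp
  linear_combination x * Real.cosh_sq x

lemma hasDerivAt_df1 {x : ℝ} (hx : x ≠ 0) : HasDerivAt df1 (df2 x) x := by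
  have hs : sinh x ≠ 0 := Real.sinh_ne_zero.2 hx
  have h1 : HasDerivAt (fun k : ℝ => sinh k * cosh k - k)
      (cosh x * cosh x + sinh x * sinh x - 1) x := by
    simpa using ((Real.hasDerivAt_sinh x).fun_mul (Real.hasDerivAt_cosh x)).fun_sub (hasDerivAt_id x)
  have h2 : HasDerivAt (fun k : ℝ => (sinh k)^2) (2 * sinh x * cosh x) x := by
    simpa [mul_comm, mul_assoc] using ((Real.hasDerivAt_sinh x).fun_pow 2)
  have := h1.fun_div h2 (by positivity)
  have heq : df1 = fun k => (sinh k * cosh k - k) / (sinh k)^2 := rfl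
  rw [heq]
  refine this.congr_deriv (Eq.symm ?_)
  rw [df2]
  field_simp
  linear_combination (sinh x) * Real.cosh_sq x

lemma hasDerivAt_df2 {x : ℝ} (hx : x ≠ 0) : HasDerivAt df2 (df3 x) x := by
  have hs : sinh x ≠ 0 := Real.sinh_ne_zero.2 hx
  have h1 : HasDerivAt (fun k : ℝ => 2*(k * cosh k - sinh k)) (2*(x * sinh x)) x := by
    have : HasDerivAt (fun k : ℝ => k * cosh k - sinh k)
        (cosh x + x * sinh x - cosh x) x := by
      simpa [mul_comm] using ((hasDerivAt_id x).fun_mul (Real.hasDerivAt_cosh x)).fun_sub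
        (Real.hasDerivAt_sinh x)
    simpa [mul_comm, mul_assoc] using this.const_mul 2
  have h2 : HasDerivAt (fun k : ℝ => (sinh k)^3) (3 * (sinh x)^2 * cosh x) x := by
    simpa [mul_comm, mul_assoc] using ((Real.hasDerivAt_sinh x).fun_pow 3)
  have := h1.fun_div h2 (by positivity)
  have heq : df2 = fun k => 2*(k * cosh k - sinh k) / (sinh k)^3 := rfl
  rw [heq]
  refine this.congr_deriv (Eq.symm ?_)
  rw [df3]
  field_simp
  ring

lemma strict_aux {q q' : ℝ → ℝ} (hd : ∀ x, HasDerivAt q (q' x) x)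
    (h0 : q 0 = 0) (hpos : ∀ x, 0 < x → 0 < q' x) {x : ℝ} (hx : 0 < x) : 0 < q x := by
  have hmono : StrictMonoOn q (Set.Ici 0) := by
    refine strictMonoOn_of_deriv_pos (convex_Ici 0) ?_ ?_
    · exact fun y _ => ((hd y).continuousAt).continuousWithinAt
    · intro y hy
      rw [interior_Ici] at hy
      rw [(hd y).deriv]
      exact hpos y hy
  have := hmono (Set.self_mem_Ici) (Set.mem_Ici.2 hx.le) hx
  linarith [this]

lemma Q_pos {x : ℝ} (hx : 0 < x) : sinh x < x * cosh x := by
  have h : 0 < x * cosh x - sinh x := by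
    refine strict_aux (q := fun y => y * cosh y - sinh y) (q' := fun x => x * sinh x)
      (fun y => ?_) (by simp) ?_ hx
    · simpa [mul_comm] using ((hasDerivAt_id y).fun_mul (Real.hasDerivAt_cosh y)).fun_sub
        (Real.hasDerivAt_sinh y)
    · intro y hy
      exact mul_pos hy (Real.sinh_pos_iff.2 hy)
  linarith

lemma P_pos {x : ℝ} (hx : 0 < x) :
    0 < 3*x*(cosh x)^2 - x*(sinh x)^2 - 3*(sinh x)*(cosh x) := by
  refine strict_aux (q := fun y => 3*y*(cosh y)^2 - y*(sinh y)^2 - 3*(sinh y)*(cosh y))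
    (q' := fun y => 4 * sinh y * (y * cosh y - sinh y)) (fun y => ?_) (by simp) ?_ hx
  · have h1 : HasDerivAt (fun y : ℝ => 3*y*(cosh y)^2)
        (3*(cosh y)^2 + 3*y*(2*sinh y*cosh y)) y := by
      have := ((hasDerivAt_id y).const_mul 3).fun_mul ((Real.hasDerivAt_cosh y).fun_pow 2)
      refine this.congr_deriv (Eq.symm ?_)
      simp only [id_eq]
      ring
    have h2 : HasDerivAt (fun y : ℝ => y*(sinh y)^2)
        ((sinh y)^2 + y*(2*cosh y*sinh y)) y := by
      have := (hasDerivAt_id y).fun_mul ((Real.hasDerivAt_sinh y).fun_pow 2)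
      refine this.congr_deriv (Eq.symm ?_)
      simp only [id_eq]
      ring
    have h3 : HasDerivAt (fun y : ℝ => 3*(sinh y)*(cosh y))
        (3*(cosh y * cosh y + sinh y * sinh y)) y := by
      have h := ((Real.hasDerivAt_sinh y).fun_mul (Real.hasDerivAt_cosh y)).const_mul 3
      simpa [mul_assoc] using h
    have := (h1.fun_sub h2).fun_sub h3
    refine this.congr_deriv (Eq.symm ?_)
    ring
  · intro y hy
    have h1 : 0 < sinh y := Real.sinh_pos_iff.2 hy
    have h2 := Q_pos hy
    show 0 < 4 * sinh y * (y * cosh y - sinh y)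
    nlinarith

lemma df3_neg {x : ℝ} (hx : 0 < x) : df3 x < 0 := by
  have hs : 0 < sinh x := Real.sinh_pos_iff.2 hx
  have hP := P_pos hx
  rw [df3]
  apply div_neg_of_neg_of_pos
  · nlinarith
  · positivity

lemma cube_le {x : ℝ} (hx : 0 ≤ x) : x^3/3 ≤ x * cosh x - sinh x := by
  rcases eq_or_lt_of_le hx with rfl | hx'
  · simp
  have h : 0 < (x * cosh x - sinh x) - x^3/3 := by
    refine strict_aux (q := fun y => (y * cosh y - sinh y) - y^3/3)
      (q' := fun y => y * sinh y - y^2) (fun y => ?_) (by simp) ?_ hx'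
    · have h1 : HasDerivAt (fun y : ℝ => y * cosh y - sinh y) (y * sinh y) y := by
        have := ((hasDerivAt_id y).fun_mul (Real.hasDerivAt_cosh y)).fun_sub (Real.hasDerivAt_sinh y)
        refine this.congr_deriv (Eq.symm ?_)
        simp only [id_eq]
        ring
      have h2 : HasDerivAt (fun y : ℝ => y^3/3) (y^2) y := by
        have := (hasDerivAt_pow 3 y).div_const 3
        refine this.congr_deriv (Eq.symm ?_)
        ring
      exact h1.sub h2
    · intro y hy
      have := Real.self_lt_sinh_iff.2 hy
      show 0 < y * sinh y - y^2
      nlinarith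
  linarith

lemma nu_props (ω β : ℝ) (hβpos : 0 < β) (ν : ℝ → ℝ)
    (hν : ∀ k : ℝ, ν k = -ω / (2 * fdisp k) +
      (1 / 2) * Real.sqrt (ω ^ 2 / (fdisp k) ^ 2 + 4 * (1 + β * k ^ 2) / fdisp k)) (k : ℝ) :
    0 < ν k ∧ fdisp k * (ν k)^2 + ω * (ν k) = 1 + β * k^2 ∧ 0 ≤ fdisp k * ν k + ω := by
  have hf : 0 < fdisp k := fdisp_pos k
  set f := fdisp k with hfdef
  set A := 1 + β * k^2 with hA
  have hApos : 0 < A := by positivity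
  set D := ω^2 + 4*A*f with hD
  have hDgt : ω^2 < D := by nlinarith
  have hDpos : 0 ≤ D := by nlinarith [sq_nonneg ω]
  have hE : ω^2/f^2 + 4*A/f = D * (1/f)^2 := by field_simp; ring
  have hsq : Real.sqrt (D * (1/f)^2) = Real.sqrt D * (1/f) := by
    rw [Real.sqrt_mul hDpos, Real.sqrt_sq (by positivity)]
  have hs2 : (Real.sqrt D)^2 = D := Real.sq_sqrt hDpos
  have habs : |ω| < Real.sqrt D := by
    calc |ω| = Real.sqrt (ω^2) := (Real.sqrt_sq_eq_abs ω).symm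
    _ < Real.sqrt D := Real.sqrt_lt_sqrt (sq_nonneg ω) hDgt
  obtain ⟨h1, h2⟩ := abs_lt.1 habs
  have hνk : ν k = (-ω + Real.sqrt D) / (2*f) := by
    rw [hν k, ← hfdef, ← hA, hE, hsq]
    field_simp
  refine ⟨?_, ?_, ?_⟩
  · rw [hνk]
    exact div_pos (by linarith) (by linarith)
  · rw [hνk]
    field_simp
    nlinarith [hs2]
  · have he : f * ((-ω + Real.sqrt D)/(2*f)) = (-ω + Real.sqrt D)/2 := by field_simp
    rw [hνk, he]
    linarith

lemma continuous_nu (ω β : ℝ) (ν : ℝ → ℝ)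
    (hν : ∀ k : ℝ, ν k = -ω / (2 * fdisp k) +
      (1 / 2) * Real.sqrt (ω ^ 2 / (fdisp k) ^ 2 + 4 * (1 + β * k ^ 2) / fdisp k)) :
    Continuous ν := by
  have hne : ∀ k, fdisp k ≠ 0 := fun k => (fdisp_pos k).ne'
  have h0 : ν = fun k => -ω / (2 * fdisp k) +
      (1 / 2) * Real.sqrt (ω ^ 2 / (fdisp k) ^ 2 + 4 * (1 + β * k ^ 2) / fdisp k) :=
    funext hν
  rw [h0]
  refine Continuous.add ?_ (Continuous.mul continuous_const ?_)
  · exact continuous_const.div (continuous_const.mul continuous_fdisp)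
      (fun k => by have := fdisp_pos k; positivity)
  · apply Real.continuous_sqrt.comp
    refine Continuous.add ?_ ?_
    · exact continuous_const.div (continuous_fdisp.pow 2)
        (fun k => by have := fdisp_pos k; positivity)
    · exact (continuous_const.mul (by continuity)).div continuous_fdisp hne

set_option maxHeartbeats 2000000 in
theorem stmt10 (ω β βc : ℝ)
    (hβc : βc = (ω ^ 2 + 2 - ω * Real.sqrt (ω ^ 2 + 4)) / 6)
    (hβpos : 0 < β) (hβ : β < βc)
    (ν : ℝ → ℝ)
    (hν : ∀ k : ℝ, ν k = -ω / (2 * fdisp k) +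
      (1 / 2) * Real.sqrt (ω ^ 2 / (fdisp k) ^ 2 + 4 * (1 + β * k ^ 2) / fdisp k)) :
    ∃ k₀ : ℝ, 0 < k₀ ∧
      (∀ k : ℝ, 0 ≤ k → ν k₀ ≤ ν k) ∧
      (∀ k : ℝ, 0 ≤ k → (∀ k' : ℝ, 0 ≤ k' → ν k ≤ ν k') → k = k₀) ∧
      ν k₀ < ν 0 ∧
      (∀ k : ℝ, 0 ≤ 1 + β * k ^ 2 - ω * ν k₀ - (ν k₀) ^ 2 * fdisp k) ∧
      (∀ k : ℝ, 1 + β * k ^ 2 - ω * ν k₀ - (ν k₀) ^ 2 * fdisp k = 0 ↔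
        k = k₀ ∨ k = -k₀) := by
  have props := nu_props ω β hβpos ν hν
  have hνeven : ∀ k, ν (-k) = ν k := by
    intro k
    rw [hν, hν, fdisp_even, neg_pow, pow_succ, pow_succ]
    ring_nf
  have hfac : ∀ k m, 0 < m → 0 < fdisp k * (ν k + m) + ω := by
    intro k m hm
    have h0 := (props k).2.2
    have hf := fdisp_pos k
    nlinarith
  have hsign : ∀ k m, 1 + β*k^2 - ω*m - m^2*fdisp k = (ν k - m) * (fdisp k * (ν k + m) + ω) := by
    intro k m
    linear_combination (-1 : ℝ) * (props k).2.1
  -- value at 0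
  have hν0pos : 0 < ν 0 := (props 0).1
  have hsq4 : (Real.sqrt (ω^2+4))^2 = ω^2+4 := Real.sq_sqrt (by positivity)
  have hν0val : ν 0 = -ω/2 + Real.sqrt (ω^2+4)/2 := by
    rw [hν 0, fdisp_zero]
    norm_num
    ring
  have h3b : 3*β < (ν 0)^2 := by
    have h1 : (ν 0)^2 = 3*βc := by
      rw [hν0val, hβc]
      linear_combination (1/4 : ℝ) * hsq4
    nlinarith
  -- small k: a point below ν 0
  have hslope : Filter.Tendsto (fun k => Real.sinh k / k) (nhdsWithin 0 (Set.Ioi 0)) (nhds 1) := by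
    have h := hasDerivAt_iff_tendsto_slope.1 (Real.hasDerivAt_sinh 0)
    rw [Real.cosh_zero] at h
    have h2 := h.mono_left (nhdsWithin_mono 0 (fun x hx => (Set.mem_Ioi.1 hx).ne' : Set.Ioi (0:ℝ) ⊆ {0}ᶜ))
    refine h2.congr (fun k => ?_)
    rw [slope_def_field, Real.sinh_zero]
    ring_nf
  have hsmall : ∃ k1, 0 < k1 ∧ ν k1 < ν 0 := by
    have hT : Filter.Tendsto (fun k => 3*β*(Real.sinh k / k)) (nhdsWithin 0 (Set.Ioi 0))
        (nhds (3*β)) := by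
      have := hslope.const_mul (3*β)
      simpa using this
    have hev := hT.eventually_lt_const h3b
    obtain ⟨k1, hk1mem, hk1lt⟩ := (eventually_mem_nhdsWithin.and hev).exists
    have hk1 : 0 < k1 := hk1mem
    refine ⟨k1, hk1, ?_⟩
    have hs : 0 < Real.sinh k1 := Real.sinh_pos_iff.2 hk1
    have hsb : 3*β*Real.sinh k1 < (ν 0)^2 * k1 := by
      have h := mul_lt_mul_of_pos_right hk1lt hk1
      have he : 3*β*(Real.sinh k1/k1)*k1 = 3*β*Real.sinh k1 := by field_simp
      rw [he] at h
      exact h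
    have hrel0 : (ν 0)^2 + ω * ν 0 = 1 := by
      have := (props 0).2.1
      rw [fdisp_zero] at this
      nlinarith [this]
    have hcube := cube_le hk1.le
    have hflt : 1 + β*k1^2 - ω*(ν 0) - (ν 0)^2 * fdisp k1 < 0 := by
      rw [fdisp_of_pos hk1]
      have hkey : (1 + β*k1^2 - ω*(ν 0))*Real.sinh k1 - (ν 0)^2*(k1*Real.cosh k1) < 0 := by
        have h1 : 3*β*Real.sinh k1*(k1*k1) < (ν 0)^2*k1*(k1*k1) :=
          mul_lt_mul_of_pos_right hsb (mul_pos hk1 hk1)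
        have h2 : (ν 0)^2*(k1^3/3) ≤ (ν 0)^2*(k1*Real.cosh k1 - Real.sinh k1) :=
          mul_le_mul_of_nonneg_left hcube (sq_nonneg _)
        nlinarith [h1, h2, hrel0]
      have heq : 1 + β*k1^2 - ω*(ν 0) - (ν 0)^2 * (k1 * Real.cosh k1 / Real.sinh k1)
          = ((1 + β*k1^2 - ω*(ν 0))*Real.sinh k1 - (ν 0)^2*(k1*Real.cosh k1)) / Real.sinh k1 := by
        field_simp
      rw [heq]
      exact div_neg_of_neg_of_pos hkey hs
    have hfeq := hsign k1 (ν 0)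
    have hfpos := hfac k1 (ν 0) hν0pos
    nlinarith [hfeq, hfpos, hflt]
  obtain ⟨k1, hk1pos, hk1lt⟩ := hsmall
  -- coercivity
  set K : ℝ := max 1 ((|ω| * ν 0 + 2*(ν 0)^2 + 1)/β) with hKdef
  have hcoerc : ∀ k, K ≤ k → ν 0 < ν k := by
    intro k hk
    have hk1' : (1:ℝ) ≤ k := le_trans (le_max_left _ _) hk
    have hkpos : 0 < k := by linarith
    have hβK : |ω| * ν 0 + 2*(ν 0)^2 + 1 ≤ β * k := by
      have h1 : (|ω| * ν 0 + 2*(ν 0)^2 + 1)/β ≤ k := le_trans (le_max_right _ _) hk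
      rw [div_le_iff₀ hβpos] at h1
      linarith
    have hfle := fdisp_le k hkpos.le
    have habs : ω * ν 0 ≤ |ω| * ν 0 := by
      have := le_abs_self ω
      nlinarith
    have hpos : 0 < 1 + β*k^2 - ω*(ν 0) - (ν 0)^2 * fdisp k := by
      have hfp := fdisp_pos k
      have p1 : (|ω| * ν 0 + 2*(ν 0)^2 + 1) * k ≤ β*k*k :=
        mul_le_mul_of_nonneg_right hβK hkpos.le
      have p2 : (ν 0)^2 * fdisp k ≤ (ν 0)^2 * (1+k) :=
        mul_le_mul_of_nonneg_left hfle (sq_nonneg _)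
      have p3 : 0 ≤ (ν 0)^2 * (k - 1) := mul_nonneg (sq_nonneg _) (by linarith)
      have p4 : 0 ≤ |ω| * ν 0 * (k - 1) :=
        mul_nonneg (mul_nonneg (abs_nonneg ω) hν0pos.le) (by linarith)
      nlinarith [p1, p2, p3, p4, habs]
    have hfeq := hsign k (ν 0)
    have hfpos := hfac k (ν 0) hν0pos
    nlinarith
  -- existence of minimizer
  have hcont := continuous_nu ω β ν hν
  set Kb : ℝ := max K k1 with hKbdef
  have hKbnn : 0 ≤ Kb := le_trans hk1pos.le (le_max_right _ _)
  obtain ⟨k₀, hk₀mem, hk₀min⟩ := (isCompact_Icc (a := (0:ℝ)) (b := Kb)).exists_isMinOn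
    (Set.nonempty_Icc.2 hKbnn) hcont.continuousOn
  have hmin := isMinOn_iff.1 hk₀min
  have hk₀Icc := Set.mem_Icc.1 hk₀mem
  have hlt0 : ν k₀ < ν 0 := by
    have h1 : ν k₀ ≤ ν k1 := hmin k1 (Set.mem_Icc.2 ⟨hk1pos.le, le_max_right _ _⟩)
    linarith
  have hglobal : ∀ k, 0 ≤ k → ν k₀ ≤ ν k := by
    intro k hk
    rcases le_or_gt k Kb with h | h
    · exact hmin k (Set.mem_Icc.2 ⟨hk, h⟩)
    · have : ν 0 < ν k := hcoerc k (le_trans (le_max_left _ _) h.le)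
      linarith
  have hk₀pos : 0 < k₀ := by
    rcases eq_or_lt_of_le hk₀Icc.1 with h | h
    · exact absurd (h ▸ hlt0) (lt_irrefl _)
    · exact h
  set m : ℝ := ν k₀ with hmdef
  have hmpos : 0 < m := (props k₀).1
  -- nonnegativity for k ≥ 0, then all k
  have hnonneg : ∀ k, 0 ≤ 1 + β*k^2 - ω*m - m^2 * fdisp k := by
    have h0 : ∀ k, 0 ≤ k → 0 ≤ 1 + β*k^2 - ω*m - m^2 * fdisp k := by
      intro k hk
      rw [hsign k m]
      have h1 : 0 ≤ ν k - m := by have := hglobal k hk; linarith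
      exact mul_nonneg h1 (hfac k m hmpos).le
    intro k
    rcases le_or_gt 0 k with hk | hk
    · exact h0 k hk
    · have := h0 (-k) (by linarith)
      rw [fdisp_even] at this
      calc (0:ℝ) ≤ 1 + β*(-k)^2 - ω*m - m^2 * fdisp k := this
      _ = 1 + β*k^2 - ω*m - m^2 * fdisp k := by ring_nf
  -- uniqueness
  have huniq : ∀ k, 0 ≤ k → ν k = m → k = k₀ := by
    intro k hk hkm
    by_contra hne
    have hkpos : 0 < k := by
      rcases eq_or_lt_of_le hk with h | h
      · exfalso; rw [← h] at hkm; linarith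
      · exact h
    set a := min k k₀ with hadef
    set b := max k k₀ with hbdef
    have hab : a < b := by
      rcases lt_or_gt_of_ne hne with h | h
      · rw [hadef, hbdef, min_eq_left h.le, max_eq_right h.le]; exact h
      · rw [hadef, hbdef, min_eq_right h.le, max_eq_left h.le]; exact h
    have hapos : 0 < a := lt_min hkpos hk₀pos
    have hνa : ν a = m := by
      rcases le_total k k₀ with h | h
      · rw [hadef, min_eq_left h]; exact hkm
      · rw [hadef, min_eq_right h]
    have hνb : ν b = m := by
      rcases le_total k k₀ with h | h
      · rw [hbdef, max_eq_right h]
      · rw [hbdef, max_eq_left h]; exact hkm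
    set G : ℝ → ℝ := fun x => 1 + β*x^2 - ω*m - m^2 * fdisp x with hGdef
    have hGnonneg : ∀ x, 0 ≤ G x := hnonneg
    have hGa : G a = 0 := by
      rw [hGdef]; simp only
      rw [hsign a m, hνa]; ring
    have hGb : G b = 0 := by
      rw [hGdef]; simp only
      rw [hsign b m, hνb]; ring
    set g1 : ℝ → ℝ := fun x => 2*β*x - m^2 * df1 x with hg1def
    set g2 : ℝ → ℝ := fun x => 2*β - m^2 * df2 x with hg2def
    have hfdisp_dx : ∀ x, 0 < x → HasDerivAt fdisp (df1 x) x := by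
      intro x hx
      refine (hasDerivAt_F hx.ne').congr_of_eventuallyEq ?_
      filter_upwards [isOpen_Ioi.mem_nhds hx] with y hy
      exact fdisp_of_pos hy
    have hG' : ∀ x, 0 < x → HasDerivAt G (g1 x) x := by
      intro x hx
      have h1 : HasDerivAt (fun y : ℝ => 1 + β*y^2 - ω*m) (2*β*x) x := by
        have := ((hasDerivAt_pow 2 x).const_mul β).const_add 1
        have h2 := this.sub_const (ω*m)
        refine h2.congr_deriv (Eq.symm ?_)
        ring
      exact h1.sub ((hfdisp_dx x hx).const_mul (m^2))
    have hg1' : ∀ x, 0 < x → HasDerivAt g1 (g2 x) x := by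
      intro x hx
      have h1 : HasDerivAt (fun y : ℝ => 2*β*y) (2*β) x := by
        simpa using (hasDerivAt_id x).const_mul (2*β)
      exact h1.sub ((hasDerivAt_df1 hx.ne').const_mul (m^2))
    have hg2' : ∀ x, 0 < x → HasDerivAt g2 (-(m^2 * df3 x)) x := by
      intro x hx
      exact ((hasDerivAt_df2 hx.ne').const_mul (m^2)).const_sub (2*β)
    have hg1a : g1 a = 0 := by
      have hloc : IsLocalMin G a := Filter.Eventually.of_forall (fun y => hGa ▸ hGnonneg y)
      exact hloc.hasDerivAt_eq_zero (hG' a hapos)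
    have hg1b : g1 b = 0 := by
      have hloc : IsLocalMin G b := Filter.Eventually.of_forall (fun y => hGb ▸ hGnonneg y)
      exact hloc.hasDerivAt_eq_zero (hG' b (lt_trans hapos hab))
    have hGcont : Continuous G := by
      have h1 : Continuous fun x : ℝ => 1 + β*x^2 - ω*m :=
        (continuous_const.add (continuous_const.mul (continuous_pow 2))).sub continuous_const
      exact h1.sub (continuous_const.mul continuous_fdisp)
    obtain ⟨c, hcmem, hg1c⟩ := exists_hasDerivAt_eq_zero hab
      hGcont.continuousOn
      (hGa.trans hGb.symm)
      (fun x hx => hG' x (lt_trans hapos hx.1))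
    have hcpos : 0 < c := lt_trans hapos hcmem.1
    obtain ⟨u, humem, hg2u⟩ := exists_hasDerivAt_eq_zero hcmem.1
      (fun x hx => ((hg1' x (lt_of_lt_of_le hapos hx.1)).continuousAt).continuousWithinAt)
      (hg1a.trans hg1c.symm)
      (fun x hx => hg1' x (lt_trans hapos hx.1))
    obtain ⟨v, hvmem, hg2v⟩ := exists_hasDerivAt_eq_zero hcmem.2
      (fun x hx => ((hg1' x (lt_of_lt_of_le hcpos hx.1)).continuousAt).continuousWithinAt)
      (hg1c.trans hg1b.symm)
      (fun x hx => hg1' x (lt_trans hcpos hx.1))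
    have hupos : 0 < u := lt_trans hapos humem.1
    have hvpos : 0 < v := lt_trans hcpos hvmem.1
    have huv : u < v := lt_trans humem.2 hvmem.1
    have hmono : StrictMonoOn g2 (Set.Ioi 0) := by
      refine strictMonoOn_of_deriv_pos (convex_Ioi 0) ?_ ?_
      · exact fun y hy => ((hg2' y hy).continuousAt).continuousWithinAt
      · intro y hy
        rw [interior_Ioi] at hy
        rw [(hg2' y hy).deriv]
        have h := mul_pos (pow_pos hmpos 2) (neg_pos.2 (df3_neg hy))
        linarith
    have := hmono (Set.mem_Ioi.2 hupos) (Set.mem_Ioi.2 hvpos) huv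
    rw [hg2u, hg2v] at this
    exact lt_irrefl 0 this
  refine ⟨k₀, hk₀pos, hglobal, ?_, hlt0, hnonneg, ?_⟩
  · intro k hk hkmin
    have h1 : ν k ≤ m := hkmin k₀ hk₀Icc.1
    have h2 : m ≤ ν k := hglobal k hk
    exact huniq k hk (le_antisymm h1 h2)
  · intro k
    constructor
    · intro hzero
      rcases le_or_gt 0 k with hk | hk
      · left
        have heq := hsign k m
        rw [hzero] at heq
        have hfp := hfac k m hmpos
        have : ν k = m := by nlinarith
        exact huniq k hk this
      · right
        have hzero' : 1 + β*(-k)^2 - ω*m - m^2 * fdisp (-k) = 0 := by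
          rw [fdisp_even]
          calc 1 + β*(-k)^2 - ω*m - m^2 * fdisp k
              = 1 + β*k^2 - ω*m - m^2 * fdisp k := by ring_nf
          _ = 0 := hzero
        have heq := hsign (-k) m
        rw [hzero'] at heq
        have hfp := hfac (-k) m hmpos
        have : ν (-k) = m := by nlinarith
        have := huniq (-k) (by linarith) this
        linarith
    · intro hk
      have hG0 : 1 + β*k₀^2 - ω*(ν k₀) - (ν k₀)^2 * fdisp k₀ = 0 := by
        rw [hsign k₀ (ν k₀)]; ring
      rcases hk with h | h
      · rw [h]; exact hG0
      · rw [h]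
        have he : 1 + β*(-k₀)^2 - ω*(ν k₀) - (ν k₀)^2 * fdisp (-k₀)
            = 1 + β*k₀^2 - ω*(ν k₀) - (ν k₀)^2 * fdisp k₀ := by
          rw [fdisp_even]; ring_nf
        rw [he]; exact hG0
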